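/- Let $Q$ be a convex quadrilateral in the complex plane with vertices $0, 1, z, w$ in counterclockwise order, and let $X > 0$ be a real number. Then the quadratic equation in $u$ given by $-\frac{(1-u)(w-u)}{(0-u)(z-u)} = X$ has two solutions (counted with multiplicity), both of which lie strictly inside $Q$. -/

import Mathlib

open Complex

/-- Cross product (orientation) of three points in ℂ: positive iff `a,b,c` are in
counterclockwise order. -/
noncomputable def ccw (a b c : ℂ) : ℝ := ((starRingEnd ℂ) (b - a) * (c - a)).im

lemma ccw_coord (a b c : ℂ) : ccw a b c
    = (b.re - a.re) * (c.im - a.im) - (b.im - a.im) * (c.re - a.re) := by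
  simp [ccw, Complex.mul_im]; ring

lemma E_im (a b u : ℂ) : ((b - u) * (starRingEnd ℂ) (a - u)).im = ccw a b u := by
  simp [ccw_coord, Complex.mul_im]; ring

lemma signlink (a b x y : ℝ) (h1 : a * y + x * b = 0) (h2 : a * b - x * y < 0)
    (hy : 0 < y) : 0 < x := by
  by_contra hx
  push_neg at hx
  have hk : a * b * y ^ 2 = -(x * y) * b ^ 2 := by linear_combination (b * y) * h1
  nlinarith [sq_nonneg b, sq_nonneg y, mul_pos hy hy, mul_nonpos_of_nonpos_of_nonneg hx hy.le]

lemma sum_ident (A B C D u : ℂ) :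
    ccw A B u + ccw B C u + ccw C D u + ccw D A u = ccw A B C + ccw C D A := by
  simp only [ccw_coord]; ring

lemma Istar (A B C D u : ℂ) :
    ccw B C D * ccw A B u
      - ((B.re - A.re) * (D.im - C.im) - (B.im - A.im) * (D.re - C.re)) * ccw B C u
      + ccw A B C * ccw C D u = ccw A B C * ccw B C D := by
  simp only [ccw_coord]; ring

lemma Istar2 (A B C D u : ℂ) :
    ccw D A B * ccw C D u
      + ((B.re - A.re) * (D.im - C.im) - (B.im - A.im) * (D.re - C.re)) * ccw D A u
      + ccw C D A * ccw A B u = ccw C D A * ccw D A B := by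
  simp only [ccw_coord]; ring

lemma ccw_self12 (a c : ℂ) : ccw a a c = 0 := by simp [ccw_coord]

lemma edge_pos (A B C D u : ℂ) (X : ℝ) (hX : 0 < X)
    (h1 : 0 < ccw A B C) (h2 : 0 < ccw B C D) (h3 : 0 < ccw C D A) (h4 : 0 < ccw D A B)
    (heq : (B - u) * (D - u) + (X : ℂ) * ((A - u) * (C - u)) = 0) :
    0 < ccw A B u := by
  -- u ≠ A and u ≠ C
  have huA : A ≠ u := by
    intro h
    rw [← h] at heq
    simp only [sub_self, zero_mul, mul_zero, add_zero] at heq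
    rcases mul_eq_zero.mp heq with h' | h'
    · rw [sub_eq_zero.mp h'] at h1
      rw [ccw_self12] at h1; exact lt_irrefl _ h1
    · have : D = A := sub_eq_zero.mp h'
      rw [this] at h4
      rw [ccw_self12] at h4; exact lt_irrefl _ h4
  have huC : C ≠ u := by
    intro h
    rw [← h] at heq
    have heq' : (B - C) * (D - C) = 0 := by
      have : (C - C : ℂ) = 0 := sub_self C
      linear_combination heq - (X : ℂ) * (A - C) * this
    rcases mul_eq_zero.mp heq' with h' | h'
    · have hBC : B = C := sub_eq_zero.mp h'
      rw [hBC] at h2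
      rw [ccw_self12] at h2; exact lt_irrefl _ h2
    · have hDC : D = C := sub_eq_zero.mp h'
      rw [hDC] at h3
      rw [ccw_self12] at h3; exact lt_irrefl _ h3
  have hprod : (B - u) * (D - u) = -(X : ℂ) * ((A - u) * (C - u)) := by
    linear_combination heq
  have hconj : (starRingEnd ℂ) (B - u) * (starRingEnd ℂ) (D - u)
      = -(X : ℂ) * ((starRingEnd ℂ) (A - u) * (starRingEnd ℂ) (C - u)) := by
    rw [← map_mul, hprod]
    rw [map_mul, map_neg, Complex.conj_ofReal, map_mul]
  set n1 : ℝ := Complex.normSq (A - u) with hn1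
  set n2 : ℝ := Complex.normSq (C - u) with hn2
  have hn1pos : 0 < n1 := Complex.normSq_pos.mpr (sub_ne_zero.mpr huA)
  have hn2pos : 0 < n2 := Complex.normSq_pos.mpr (sub_ne_zero.mpr huC)
  set E1 : ℂ := (B - u) * (starRingEnd ℂ) (A - u) with hE1
  set E3 : ℂ := (D - u) * (starRingEnd ℂ) (C - u) with hE3
  set E2 : ℂ := (C - u) * (starRingEnd ℂ) (B - u) with hE2
  set E4 : ℂ := (A - u) * (starRingEnd ℂ) (D - u) with hE4
  have hmc1 : (A - u) * (starRingEnd ℂ) (A - u) = (n1 : ℂ) := Complex.mul_conj _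
  have hmc2 : (C - u) * (starRingEnd ℂ) (C - u) = (n2 : ℂ) := Complex.mul_conj _
  have hG13 : E1 * E3 = -(X : ℂ) * ((n1 : ℂ) * (n2 : ℂ)) := by
    rw [hE1, hE3]
    linear_combination ((starRingEnd ℂ) (A - u) * (starRingEnd ℂ) (C - u)) * hprod
      - (X : ℂ) * (starRingEnd ℂ) (C - u) * (C - u) * hmc1
      - (X : ℂ) * (n1 : ℂ) * hmc2
  have hG24 : E2 * E4 = -(X : ℂ) * ((n1 : ℂ) * (n2 : ℂ)) := by
    rw [hE2, hE4]
    linear_combination ((A - u) * (C - u)) * hconj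
      - (X : ℂ) * (starRingEnd ℂ) (C - u) * (C - u) * hmc1
      - (X : ℂ) * (n1 : ℂ) * hmc2
  have him13 : (E1 * E3).im = 0 := by
    rw [hG13]
    simp [← Complex.ofReal_mul, ← Complex.ofReal_neg]
  have hre13 : (E1 * E3).re < 0 := by
    rw [hG13]
    have : -(X : ℂ) * ((n1 : ℂ) * (n2 : ℂ)) = ((-(X * (n1 * n2)) : ℝ) : ℂ) := by push_cast; ring
    rw [this, Complex.ofReal_re]
    have : 0 < X * (n1 * n2) := by positivity
    linarith
  have him24 : (E2 * E4).im = 0 := by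
    rw [hG24]
    simp [← Complex.ofReal_mul, ← Complex.ofReal_neg]
  have hre24 : (E2 * E4).re < 0 := by
    rw [hG24]
    have : -(X : ℂ) * ((n1 : ℂ) * (n2 : ℂ)) = ((-(X * (n1 * n2)) : ℝ) : ℂ) := by push_cast; ring
    rw [this, Complex.ofReal_re]
    have : 0 < X * (n1 * n2) := by positivity
    linarith
  rw [Complex.mul_im] at him13 him24
  rw [Complex.mul_re] at hre13 hre24
  have hpE : E1.im = ccw A B u := by rw [hE1]; exact E_im A B u
  have hrE : E3.im = ccw C D u := by rw [hE3]; exact E_im C D u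
  have hqE : E2.im = ccw B C u := by rw [hE2]; exact E_im B C u
  have hmE : E4.im = ccw D A u := by rw [hE4]; exact E_im D A u
  rw [hpE, hrE] at him13 hre13
  rw [hqE, hmE] at him24 hre24
  -- now the real reasoning
  by_contra hp
  push_neg at hp
  have hr : ccw C D u ≤ 0 := by
    by_contra hr'
    push_neg at hr'
    have := signlink E1.re E3.re (ccw A B u) (ccw C D u) him13 hre13 hr'
    linarith
  have hqm : 0 < ccw B C u + ccw D A u := by
    have := sum_ident A B C D u
    linarith
  have hm : 0 < ccw D A u := by
    by_contra hm'
    push_neg at hm'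
    have hq' : ccw B C u ≤ 0 := by
      by_contra hq''
      push_neg at hq''
      have : 0 < ccw D A u := by
        refine signlink E4.re E2.re (ccw D A u) (ccw B C u) ?_ ?_ hq''
        · linarith
        · nlinarith [him24, hre24]
      linarith
    linarith
  have hq : 0 < ccw B C u := by
    refine signlink E2.re E4.re (ccw B C u) (ccw D A u) ?_ ?_ hm
    · linarith
    · linarith
  set cr : ℝ := (B.re - A.re) * (D.im - C.im) - (B.im - A.im) * (D.re - C.re) with hcr
  rcases le_or_gt 0 cr with hcrs | hcrs
  · have hid := Istar A B C D u
    nlinarith [mul_pos h1 h2, mul_nonneg hcrs hq.le,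
      mul_nonpos_of_nonneg_of_nonpos h2.le hp, mul_nonpos_of_nonneg_of_nonpos h1.le hr]
  · have hid := Istar2 A B C D u
    nlinarith [mul_pos h3 h4, mul_nonpos_of_nonneg_of_nonpos h4.le hr,
      mul_nonpos_of_nonpos_of_nonneg hcrs.le hm.le,
      mul_nonpos_of_nonneg_of_nonpos h3.le hp]

lemma bary (a b c v : ℂ) :
    ((ccw v b c : ℝ) : ℂ) * a + ((ccw a v c : ℝ) : ℂ) * b + ((ccw a b v : ℝ) : ℂ) * c
      = ((ccw a b c : ℝ) : ℂ) * v := by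
  simp only [ccw_coord, Complex.ext_iff, Complex.add_re, Complex.add_im, Complex.mul_re,
    Complex.mul_im, Complex.ofReal_re, Complex.ofReal_im]
  constructor <;> ring

lemma tri_sum (a b c v : ℂ) : ccw v b c + ccw a v c + ccw a b v = ccw a b c := by
  simp only [ccw_coord]; ring

lemma tri_mem (a b c v : ℂ) (hS : 0 < ccw a b c) (hα : 0 ≤ ccw v b c)
    (hβ : 0 ≤ ccw a v c) (hγ : 0 ≤ ccw a b v) : v ∈ convexHull ℝ ({a, b, c} : Set ℂ) := by
  set S := ccw a b c with hSdef
  have hS' : S ≠ 0 := ne_of_gt hS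
  have hconv := convex_convexHull ℝ ({a, b, c} : Set ℂ)
  have hsum := tri_sum a b c v
  set w : Fin 3 → ℝ := ![ccw v b c / S, ccw a v c / S, ccw a b v / S] with hw
  set z : Fin 3 → ℂ := ![a, b, c] with hz
  have h0 : ∀ i ∈ Finset.univ, 0 ≤ w i := by
    intro i _
    fin_cases i <;> simp [hw] <;> positivity
  have h1 : ∑ i ∈ Finset.univ, w i = 1 := by
    rw [Fin.sum_univ_three]
    simp only [hw, Matrix.cons_val_zero, Matrix.cons_val_one, Matrix.head_cons,
      Matrix.cons_val_two, Matrix.tail_cons]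
    field_simp
    linarith [hsum]
  have hzs : ∀ i ∈ Finset.univ, z i ∈ convexHull ℝ ({a, b, c} : Set ℂ) := by
    intro i _
    fin_cases i <;> simp [hz] <;> apply subset_convexHull <;> simp
  have := hconv.sum_mem h0 h1 hzs
  rw [Fin.sum_univ_three] at this
  have hSc : (S : ℂ) ≠ 0 := Complex.ofReal_ne_zero.mpr hS'
  have hv : w 0 • z 0 + w 1 • z 1 + w 2 • z 2 = v := by
    simp only [hw, hz, Matrix.cons_val_zero, Matrix.cons_val_one, Matrix.head_cons,
      Matrix.cons_val_two, Matrix.tail_cons]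
    rw [Complex.real_smul, Complex.real_smul, Complex.real_smul]
    push_cast
    field_simp
    linear_combination bary a b c v
  rwa [hv] at this

lemma ccw_rot (a b c : ℂ) : ccw a b c = ccw b c a := by
  simp only [ccw_coord]; ring

lemma ccw_neg23 (a b c : ℂ) : ccw a b c = - ccw a c b := by
  simp only [ccw_coord]; ring

lemma ccw_neg12 (a b c : ℂ) : ccw a b c = - ccw b a c := by
  simp only [ccw_coord]; ring

lemma ccw_cont (a b : ℂ) : Continuous fun v => ccw a b v := by
  simp only [ccw]
  exact Complex.continuous_im.comp (continuous_const.mul (continuous_id.sub continuous_const))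

lemma interior_mem (A B C D u : ℂ) (h1 : 0 < ccw A B C) (h3 : 0 < ccw C D A)
    (hp : 0 < ccw A B u) (hq : 0 < ccw B C u) (hr : 0 < ccw C D u) (hm : 0 < ccw D A u) :
    u ∈ interior (convexHull ℝ ({A, B, C, D} : Set ℂ)) := by
  rw [mem_interior]
  refine ⟨{v | 0 < ccw A B v ∧ 0 < ccw B C v ∧ 0 < ccw C D v ∧ 0 < ccw D A v},
    ?_, ?_, ⟨hp, hq, hr, hm⟩⟩
  · rintro v ⟨hp', hq', hr', hm'⟩
    rcases le_or_gt (ccw A C v) 0 with hd | hd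
    · have hmem : v ∈ convexHull ℝ ({A, B, C} : Set ℂ) := by
        refine tri_mem A B C v h1 ?_ ?_ hp'.le
        · rw [ccw_rot]; exact hq'.le
        · rw [ccw_neg23]; linarith
      refine convexHull_mono ?_ hmem
      intro x hx
      simp only [Set.mem_insert_iff, Set.mem_singleton_iff] at hx ⊢
      tauto
    · have hmem : v ∈ convexHull ℝ ({A, C, D} : Set ℂ) := by
        refine tri_mem A C D v (by rwa [ccw_rot]) ?_ ?_ hd.le
        · rw [ccw_rot]; exact hr'.le
        · rw [ccw_neg23, ccw_neg12]; linarith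
      refine convexHull_mono ?_ hmem
      intro x hx
      simp only [Set.mem_insert_iff, Set.mem_singleton_iff] at hx ⊢
      tauto
  · have e1 := (isOpen_Ioi (a := (0:ℝ))).preimage (ccw_cont A B)
    have e2 := (isOpen_Ioi (a := (0:ℝ))).preimage (ccw_cont B C)
    have e3 := (isOpen_Ioi (a := (0:ℝ))).preimage (ccw_cont C D)
    have e4 := (isOpen_Ioi (a := (0:ℝ))).preimage (ccw_cont D A)
    have : {v | 0 < ccw A B v ∧ 0 < ccw B C v ∧ 0 < ccw C D v ∧ 0 < ccw D A v}
        = ((fun v => ccw A B v) ⁻¹' Set.Ioi 0) ∩ (((fun v => ccw B C v) ⁻¹' Set.Ioi 0)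
          ∩ (((fun v => ccw C D v) ⁻¹' Set.Ioi 0) ∩ ((fun v => ccw D A v) ⁻¹' Set.Ioi 0))) := by
      ext v; simp [Set.mem_Ioi, and_assoc]
    rw [this]
    exact e1.inter (e2.inter (e3.inter e4))

theorem stmt0 (z w : ℂ) (X : ℝ) (hX : 0 < X)
    (hccw1 : 0 < ccw 0 1 z) (hccw2 : 0 < ccw 1 z w)
    (hccw3 : 0 < ccw z w 0) (hccw4 : 0 < ccw w 0 1) :
    ∃ u₁ u₂ : ℂ,
      u₁ ∈ interior (convexHull ℝ ({0, 1, z, w} : Set ℂ)) ∧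
      u₂ ∈ interior (convexHull ℝ ({0, 1, z, w} : Set ℂ)) ∧
      ∀ u : ℂ, (1 - u) * (w - u) - (X : ℂ) * u * (z - u)
        = (1 + (X : ℂ)) * (u - u₁) * (u - u₂) := by
  obtain ⟨s, hs⟩ := IsAlgClosed.exists_pow_nat_eq
    ((1 + w + (X : ℂ) * z) ^ 2 - 4 * ((1 + (X : ℂ)) * w)) (n := 2) (by norm_num)
  have hX0 : (1 + (X : ℂ)) ≠ 0 := by
    have h : ((1 + X : ℝ) : ℂ) ≠ 0 := Complex.ofReal_ne_zero.mpr (by positivity)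
    push_cast at h
    exact h
  set c1 : ℂ := 1 + w + (X : ℂ) * z with hc1
  set u₁ : ℂ := (c1 + s) / (2 * (1 + (X : ℂ))) with hu1
  set u₂ : ℂ := (c1 - s) / (2 * (1 + (X : ℂ))) with hu2
  have key : ∀ u : ℂ, (1 - u) * (w - u) - (X : ℂ) * u * (z - u)
      = (1 + (X : ℂ)) * (u - u₁) * (u - u₂) := by
    intro u
    rw [hu1, hu2, hc1]
    field_simp
    ring_nf
    ring_nf at hs
    rw [hc1] at hs
    linear_combination hs
  have mem : ∀ v : ℂ, (1 - v) * (w - v) - (X : ℂ) * v * (z - v) = 0 →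
      v ∈ interior (convexHull ℝ ({0, 1, z, w} : Set ℂ)) := by
    intro v hv
    have hXinv : 0 < X⁻¹ := inv_pos.mpr hX
    have hXc : (X : ℂ) ≠ 0 := Complex.ofReal_ne_zero.mpr (ne_of_gt hX)
    have hXim : (X : ℂ)⁻¹ * (X : ℂ) = 1 := inv_mul_cancel₀ hXc
    have hcast : ((X⁻¹ : ℝ) : ℂ) = (X : ℂ)⁻¹ := Complex.ofReal_inv X
    have e1 : 0 < ccw 0 1 v := by
      refine edge_pos 0 1 z w v X hX hccw1 hccw2 hccw3 hccw4 ?_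
      linear_combination hv
    have e2 : 0 < ccw 1 z v := by
      refine edge_pos 1 z w 0 v X⁻¹ hXinv hccw2 hccw3 hccw4 hccw1 ?_
      rw [hcast]
      linear_combination (X : ℂ)⁻¹ * hv + (v * (z - v)) * hXim
    have e3 : 0 < ccw z w v := by
      refine edge_pos z w 0 1 v X hX hccw3 hccw4 hccw1 hccw2 ?_
      linear_combination hv
    have e4 : 0 < ccw w 0 v := by
      refine edge_pos w 0 1 z v X⁻¹ hXinv hccw4 hccw1 hccw2 hccw3 ?_
      rw [hcast]
      linear_combination (X : ℂ)⁻¹ * hv + (v * (z - v)) * hXim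
    exact interior_mem 0 1 z w v hccw1 hccw3 e1 e2 e3 e4
  refine ⟨u₁, u₂, mem u₁ ?_, mem u₂ ?_, key⟩
  · rw [key u₁]; ring
  · rw [key u₂]; ring
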